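/- arXiv:2505.05984 — 3 statements merged into one kernel-verified Lean document; each statement's English description precedes it below -/
import Mathlib

section
/- For every natural number n ≥ 1 and real t, the exponential generating series identity ∑_{n=0}^∞ (α^n/n!) * m_n(t) = ₁F₁(1-α; 2; -α t) holds as an identity of formal power series in α (equivalently, for all complex α), where m_n(t) := n! * ∑_{j=⌈n/2⌉}^{n} t^j/(j!(1+j)!) * s(1+j, n+1-j) and ₁F₁(a;b;x) = ∑_{j≥0} (a^{(j)}/b^{(j)}) x^j/j! is Kummer's confluent hypergeometric function. -/
/-- Signed Stirling numbers of the first kind. -/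
def stirlingS1 : ℕ → ℕ → ℤ
  | 0, 0 => 1
  | 0, _ + 1 => 0
  | _ + 1, 0 => 0
  | n + 1, k + 1 => stirlingS1 n k - n * stirlingS1 n (k + 1)

/-- Kummer's confluent hypergeometric function `₁F₁(a;b;x)` as a sum over `ℂ`. -/
noncomputable def kummerF (a b x : ℂ) : ℂ :=
  ∑' j : ℕ, ((ascPochhammer ℂ j).eval a / (ascPochhammer ℂ j).eval b) * x ^ j /
    (j.factorial : ℂ)

/-- The moments `mₙ(t) = n! ∑_{j=⌈n/2⌉}^n tʲ/(j!(1+j)!) s(1+j, n+1-j)`. -/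
noncomputable def momPoly (n : ℕ) (t : ℝ) : ℂ :=
  (n.factorial : ℂ) * ∑ j ∈ Finset.Icc ((n + 1) / 2) n,
    (t : ℂ) ^ j / ((j.factorial : ℂ) * ((1 + j).factorial : ℂ)) *
      (stirlingS1 (1 + j) (n + 1 - j) : ℂ)

open Finset

lemma st_succ (n k : ℕ) : stirlingS1 (n+1) (k+1) = stirlingS1 n k - n * stirlingS1 n (k+1) := rfl

lemma st_zero_left (n : ℕ) : stirlingS1 (n+1) 0 = 0 := rfl

lemma st_zero_of_lt (m : ℕ) : ∀ k, m < k → stirlingS1 m k = 0 := by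
  induction m with
  | zero => intro k hk; match k, hk with | (k+1), _ => rfl
  | succ m ih =>
    intro k hk
    match k, hk with
    | (k+1), hk =>
      rw [st_succ, ih k (by omega), ih (k+1) (by omega)]
      ring

lemma st_poly (m : ℕ) (x : ℂ) :
    ∑ k ∈ range (m+1), (stirlingS1 m k : ℂ) * x ^ k = ∏ i ∈ range m, (x - i) := by
  induction m with
  | zero => simp [stirlingS1]
  | succ m ih =>
    have h0 : ∀ k ∈ range (m+1), (stirlingS1 (m+1) (k+1) : ℂ) * x ^ (k+1)
        = (stirlingS1 m k : ℂ) * x ^ k * x - (m : ℂ) * ((stirlingS1 m (k+1) : ℂ) * x^(k+1)) := by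
      intro k _; rw [st_succ]; push_cast; ring
    have hs1 : ∑ k ∈ range (m+1), (stirlingS1 m (k+1) : ℂ) * x ^ (k+1)
        = (∑ k ∈ range (m+1), (stirlingS1 m k : ℂ) * x ^ k) - (stirlingS1 m 0 : ℂ) := by
      rw [Finset.sum_range_succ, st_zero_of_lt m (m+1) (by omega),
        Finset.sum_range_succ' (fun k => (stirlingS1 m k : ℂ) * x ^ k) m]
      push_cast; ring
    have hm0 : (m : ℂ) * (stirlingS1 m 0 : ℂ) = 0 := by
      cases m with
      | zero => simp
      | succ m => rw [st_zero_left]; push_cast; ring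
    rw [Finset.sum_range_succ', Finset.prod_range_succ, ← ih]
    rw [Finset.sum_congr rfl h0, Finset.sum_sub_distrib, ← Finset.sum_mul, ← Finset.mul_sum,
      hs1, st_zero_left, mul_sub, hm0]
    push_cast; ring

lemma st_shift (m : ℕ) (x : ℂ) :
    ∑ i ∈ range (m+1), (stirlingS1 (m+1) (i+1) : ℂ) * x ^ i
      = ∏ i ∈ range m, (x - (i+1)) := by
  induction m with
  | zero => simp [stirlingS1]
  | succ m ih =>
    have h0 : ∀ i ∈ range (m+2), (stirlingS1 (m+2) (i+1) : ℂ) * x ^ i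
        = (stirlingS1 (m+1) i : ℂ) * x ^ i - ((m:ℂ)+1) * ((stirlingS1 (m+1) (i+1) : ℂ) * x ^ i) := by
      intro i _; rw [st_succ]; push_cast; ring
    rw [Finset.sum_congr rfl h0, Finset.sum_sub_distrib, ← Finset.mul_sum]
    rw [st_poly (m+1) x]
    have h1 : ∑ i ∈ range (m+2), (stirlingS1 (m+1) (i+1) : ℂ) * x ^ i
        = ∑ i ∈ range (m+1), (stirlingS1 (m+1) (i+1) : ℂ) * x ^ i := by
      rw [Finset.sum_range_succ, st_zero_of_lt (m+1) (m+2) (by omega)]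
      push_cast; ring
    rw [h1, ih, Finset.prod_range_succ' (fun i => (x - (i:ℂ))) m,
      Finset.prod_range_succ (fun i => (x - ((i:ℂ)+1))) m]
    push_cast; ring

lemma st_abs_sum (m : ℕ) : ∑ k ∈ range (m+1), (stirlingS1 m k).natAbs ≤ m.factorial := by
  induction m with
  | zero => simp [stirlingS1]
  | succ m ih =>
    have h1 : ∑ k ∈ range (m+1), (stirlingS1 m (k+1)).natAbs
        ≤ ∑ k ∈ range (m+1), (stirlingS1 m k).natAbs := by
      rw [Finset.sum_range_succ, st_zero_of_lt m (m+1) (by omega),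
        Finset.sum_range_succ' (fun k => (stirlingS1 m k).natAbs) m]
      simp
    calc ∑ k ∈ range (m+2), (stirlingS1 (m+1) k).natAbs
        = ∑ k ∈ range (m+1), (stirlingS1 (m+1) (k+1)).natAbs := by
          rw [Finset.sum_range_succ' (fun k => (stirlingS1 (m+1) k).natAbs) (m+1), st_zero_left]
          simp
      _ ≤ ∑ k ∈ range (m+1), ((stirlingS1 m k).natAbs + m * (stirlingS1 m (k+1)).natAbs) := by
          apply Finset.sum_le_sum
          intro k _
          rw [st_succ]
          calc (stirlingS1 m k - m * stirlingS1 m (k+1)).natAbs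
              ≤ (stirlingS1 m k).natAbs + ((m : ℤ) * stirlingS1 m (k+1)).natAbs :=
                Int.natAbs_sub_le _ _
            _ = (stirlingS1 m k).natAbs + m * (stirlingS1 m (k+1)).natAbs := by
                rw [Int.natAbs_mul]; simp
      _ = (∑ k ∈ range (m+1), (stirlingS1 m k).natAbs)
            + m * ∑ k ∈ range (m+1), (stirlingS1 m (k+1)).natAbs := by
          rw [Finset.sum_add_distrib, Finset.mul_sum]
      _ ≤ m.factorial + m * m.factorial := by
          exact Nat.add_le_add ih (Nat.mul_le_mul_left m (le_trans h1 ih))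
      _ = (m+1).factorial := by rw [Nat.factorial_succ]; ring

lemma st_abs_le (m k : ℕ) : (stirlingS1 m k).natAbs ≤ m.factorial := by
  rcases le_or_gt k m with h | h
  · exact le_trans (Finset.single_le_sum (f := fun k => (stirlingS1 m k).natAbs)
      (fun _ _ => Nat.zero_le _) (Finset.mem_range.mpr (by omega))) (st_abs_sum m)
  · rw [st_zero_of_lt m k h]; simp

lemma asc_prod (j : ℕ) (x : ℂ) :
    (ascPochhammer ℂ j).eval x = ∏ i ∈ range j, (x + i) := by
  induction j with
  | zero => simp
  | succ j ih => rw [ascPochhammer_succ_eval, ih, Finset.prod_range_succ]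

lemma asc_two (j : ℕ) : (ascPochhammer ℂ j).eval 2 = ((j+1).factorial : ℂ) := by
  induction j with
  | zero => simp
  | succ j ih =>
    rw [ascPochhammer_succ_eval, ih, show j+1+1 = j+2 from rfl,
      Nat.factorial_succ (j+1)]
    push_cast; ring

set_option maxHeartbeats 1000000 in
theorem egf_moments_eq_kummer (t : ℝ) (α : ℂ) :
    HasSum (fun n : ℕ => α ^ n / (n.factorial : ℂ) * momPoly n t)
      (kummerF (1 - α) 2 (-α * (t : ℂ))) := by
  set F : ℕ × ℕ → ℂ := fun p =>
    if p.2 ∈ Finset.Icc p.1 (2 * p.1) then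
      α ^ p.2 * ((t : ℂ) ^ p.1 / ((p.1.factorial : ℂ) * ((1 + p.1).factorial : ℂ)))
        * (stirlingS1 (1 + p.1) (p.2 + 1 - p.1) : ℂ)
    else 0 with hFdef
  set κ : ℕ → ℂ := fun j =>
    ((ascPochhammer ℂ j).eval (1 - α) / (ascPochhammer ℂ j).eval 2) * (-α * (t : ℂ)) ^ j
      / (j.factorial : ℂ) with hκdef
  have hF0 : ∀ (j n : ℕ), n ∉ Finset.Icc j (2*j) → F (j, n) = 0 := by
    intro j n h; simp only [hFdef, if_neg h]
  -- per-term bound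
  set C : ℝ := (1 + ‖α‖)^2 * |t| with hCdef
  have hC0 : 0 ≤ C := by positivity
  have hterm : ∀ j n : ℕ, ‖F (j, n)‖ ≤ C ^ j / (j.factorial : ℝ) := by
    intro j n
    by_cases hn : n ∈ Finset.Icc j (2*j)
    · have hmem := Finset.mem_Icc.mp hn
      have hEq : C ^ j / (j.factorial : ℝ)
          = (1 + ‖α‖)^(2*j) * (|t|^j / ((j.factorial : ℝ) * ((1+j).factorial : ℝ)))
            * ((1+j).factorial : ℝ) := by
        have h1 : ((1+j).factorial : ℝ) ≠ 0 := Nat.cast_ne_zero.mpr (1+j).factorial_ne_zero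
        rw [hCdef, mul_pow, pow_mul]
        field_simp
      have hval : ‖F (j, n)‖ = ‖α‖^n * (|t|^j / ((j.factorial : ℝ) * ((1+j).factorial : ℝ)))
          * ((stirlingS1 (1+j) (n+1-j)).natAbs : ℝ) := by
        simp only [hFdef, if_pos hn]
        rw [norm_mul, norm_mul, norm_pow, norm_div, norm_pow, norm_mul,
          Complex.norm_real, Complex.norm_intCast, Complex.norm_natCast,
          Complex.norm_natCast]
        rw [Real.norm_eq_abs, Nat.cast_natAbs, Int.cast_abs]
      have h2 : ‖α‖^n ≤ (1+‖α‖)^(2*j) := by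
        calc ‖α‖^n ≤ (1+‖α‖)^n := pow_le_pow_left₀ (norm_nonneg _) (by linarith [norm_nonneg α]) n
          _ ≤ (1+‖α‖)^(2*j) := pow_le_pow_right₀ (by linarith [norm_nonneg α]) (by omega)
      have h3 : ((stirlingS1 (1+j) (n+1-j)).natAbs : ℝ) ≤ ((1+j).factorial : ℝ) := by
        exact_mod_cast st_abs_le (1+j) (n+1-j)
      rw [hval, hEq]
      gcongr
    · rw [hF0 j n hn, norm_zero]; positivity
  -- summability
  have hsummable : Summable F := by
    apply Summable.of_norm
    rw [summable_prod_of_nonneg (fun p => norm_nonneg (F p))]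
    constructor
    · intro j
      apply summable_of_ne_finset_zero (s := Finset.Icc j (2*j))
      intro n hn
      rw [hF0 j n hn, norm_zero]
    · have hb : ∀ j : ℕ, ∑' n : ℕ, ‖F (j, n)‖ ≤ (2*C)^j / (j.factorial : ℝ) := by
        intro j
        have h1 : ∑' n : ℕ, ‖F (j, n)‖ = ∑ n ∈ Finset.Icc j (2*j), ‖F (j, n)‖ :=
          tsum_eq_sum (fun n hn => by rw [hF0 j n hn, norm_zero])
        rw [h1]
        calc ∑ n ∈ Finset.Icc j (2*j), ‖F (j, n)‖
            ≤ (Finset.Icc j (2*j)).card • (C^j / (j.factorial : ℝ)) :=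
              Finset.sum_le_card_nsmul _ _ _ (fun n _ => hterm j n)
          _ = (j+1 : ℝ) * (C^j / (j.factorial : ℝ)) := by
              rw [Nat.card_Icc, show 2*j+1-j = j+1 from by omega, nsmul_eq_mul]
              push_cast
              ring
          _ ≤ (2:ℝ)^j * (C^j / (j.factorial : ℝ)) := by
              apply mul_le_mul_of_nonneg_right _ (by positivity)
              have : j < 2 ^ j := Nat.lt_two_pow_self
              exact_mod_cast Nat.succ_le_of_lt this
          _ = (2*C)^j / (j.factorial : ℝ) := by rw [mul_pow (2:ℝ) C j, mul_div_assoc]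
      exact Summable.of_nonneg_of_le (fun j => tsum_nonneg fun n => norm_nonneg _) hb
        (Real.summable_pow_div_factorial (2*C))
  have hS : HasSum F (∑' p, F p) := hsummable.hasSum
  set S : ℂ := ∑' p, F p with hSdef
  -- fiberwise over j : kummer terms
  have hfib_j : ∀ j : ℕ, HasSum (fun n => F (j, n)) (κ j) := by
    intro j
    have h := hasSum_sum_of_ne_finset_zero (L := SummationFilter.unconditional ℕ) (f := fun n => F (j, n))
      (s := Finset.Icc j (2*j)) (fun n hn => hF0 j n hn)
    have hsum : ∑ n ∈ Finset.Icc j (2*j), F (j, n) = κ j := by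
      have e1 : ∀ n ∈ Finset.Icc j (2*j), F (j, n)
          = α ^ n * ((t : ℂ) ^ j / ((j.factorial : ℂ) * ((1 + j).factorial : ℂ)))
            * (stirlingS1 (1 + j) (n + 1 - j) : ℂ) := by
        intro n hn; simp only [hFdef, if_pos hn]
      rw [Finset.sum_congr rfl e1]
      have e2 : Finset.Icc j (2*j) = Finset.map (addLeftEmbedding j)
          (Finset.range (j+1)) := by
        ext n
        simp only [Finset.mem_Icc, Finset.mem_map, Finset.mem_range,
          addLeftEmbedding_apply]
        constructor
        · intro h; exact ⟨n - j, by omega, by omega⟩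
        · rintro ⟨i, hi, rfl⟩; omega
      rw [e2, Finset.sum_map]
      simp only [addLeftEmbedding_apply]
      have e3 : ∀ i ∈ Finset.range (j+1),
          α ^ (j+i) * ((t : ℂ) ^ j / ((j.factorial : ℂ) * ((1 + j).factorial : ℂ)))
            * (stirlingS1 (1 + j) (j + i + 1 - j) : ℂ)
          = ((t : ℂ) ^ j / ((j.factorial : ℂ) * ((1 + j).factorial : ℂ))) * α ^ j
            * ((stirlingS1 (j+1) (i+1) : ℂ) * α ^ i) := by
        intro i _
        rw [show j + i + 1 - j = i + 1 from by omega, show 1 + j = j + 1 from by omega,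
          pow_add]
        ring
      rw [Finset.sum_congr rfl e3, ← Finset.mul_sum, st_shift j α]
      have hprod : (∏ i ∈ range j, ((1-α) + (i:ℂ))) * (-α * (t:ℂ)) ^ j
          = (∏ i ∈ range j, (α - ((i:ℂ)+1))) * (α ^ j * (t:ℂ) ^ j) := by
        calc (∏ i ∈ range j, ((1-α) + (i:ℂ))) * (-α * (t:ℂ)) ^ j
            = ∏ i ∈ range j, (((1-α) + (i:ℂ)) * (-α * (t:ℂ))) := by
              rw [Finset.prod_mul_distrib, Finset.prod_const, Finset.card_range]
          _ = ∏ i ∈ range j, ((α - ((i:ℂ)+1)) * (α * (t:ℂ))) := by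
              exact Finset.prod_congr rfl (fun i _ => by ring)
          _ = (∏ i ∈ range j, (α - ((i:ℂ)+1))) * (α ^ j * (t:ℂ) ^ j) := by
              rw [Finset.prod_mul_distrib, Finset.prod_const, Finset.card_range, mul_pow]
      have hκj : κ j = (∏ i ∈ range j, (α - ((i:ℂ)+1))) * (α ^ j * (t:ℂ) ^ j)
          / (((j+1).factorial : ℂ) * ((j).factorial : ℂ)) := by
        rw [hκdef]
        simp only
        rw [asc_prod j (1-α), asc_two j, div_mul_eq_mul_div, div_div, hprod]
      have hj1 : ((j+1).factorial : ℂ) ≠ 0 := Nat.cast_ne_zero.mpr (j+1).factorial_ne_zero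
      have hj2 : ((j).factorial : ℂ) ≠ 0 := Nat.cast_ne_zero.mpr (j).factorial_ne_zero
      rw [hκj, show 1 + j = j + 1 from by omega]
      field_simp
    rw [← hsum]
    exact h
  have hκS : HasSum κ S := hS.prod_fiberwise hfib_j
  -- fiberwise over n : LHS terms
  have hfib_n : ∀ n : ℕ, HasSum (fun j => F (j, n)) (α ^ n / (n.factorial : ℂ) * momPoly n t) := by
    intro n
    have h := hasSum_sum_of_ne_finset_zero (L := SummationFilter.unconditional ℕ) (f := fun j => F (j, n))
      (s := Finset.Icc ((n+1)/2) n)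
      (fun j hj => hF0 j n (by
        simp only [Finset.mem_Icc] at hj ⊢
        omega))
    have hsum : ∑ j ∈ Finset.Icc ((n+1)/2) n, F (j, n)
        = α ^ n / (n.factorial : ℂ) * momPoly n t := by
      rw [momPoly, ← mul_assoc,
        div_mul_cancel₀ _ (Nat.cast_ne_zero.mpr n.factorial_ne_zero : (n.factorial : ℂ) ≠ 0),
        Finset.mul_sum]
      apply Finset.sum_congr rfl
      intro j hj
      have hmem : n ∈ Finset.Icc j (2*j) := by
        simp only [Finset.mem_Icc] at hj ⊢
        omega
      simp only [hFdef, if_pos hmem]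
      ring
    rw [← hsum]
    exact h
  have hswap : HasSum (fun p : ℕ × ℕ => F (p.2, p.1)) S := by
    have h2 := (Equiv.prodComm ℕ ℕ).hasSum_iff.mpr hS
    exact h2
  have hLHS : HasSum (fun n : ℕ => α ^ n / (n.factorial : ℂ) * momPoly n t) S :=
    hswap.prod_fiberwise hfib_n
  have hfinal : kummerF (1 - α) 2 (-α * (t : ℂ)) = S := by
    rw [kummerF]
    exact hκS.tsum_eq
  rw [hfinal]
  exact hLHS
end

section
/- Kummer's transformation: for all real (or complex) a, x and all b that is not a nonpositive integer, ₁F₁(a; b; x) = e^x * ₁F₁(b - a; b; -x). -/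
open Finset

/-- Abbreviation for the rising factorial (Pochhammer) evaluated at a complex number. -/
noncomputable def P (a : ℂ) (n : ℕ) : ℂ := (ascPochhammer ℂ n).eval a

lemma P_zero (a : ℂ) : P a 0 = 1 := by simp [P]

lemma P_succ (a : ℂ) (n : ℕ) : P a (n+1) = P a n * (a + n) := ascPochhammer_succ_eval n a

lemma P_succ_left (a : ℂ) (n : ℕ) : P a (n+1) = a * P (a+1) n := by
  induction n with
  | zero => simp [P_succ, P_zero]
  | succ n ih => rw [P_succ, ih, P_succ]; push_cast; ring

lemma P_add (b : ℂ) (j m : ℕ) : P b (j + m) = P b j * P (b + j) m := by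
  induction m with
  | zero => simp [P_zero]
  | succ m ih =>
    rw [show j + (m+1) = (j+m)+1 from rfl, P_succ, ih, P_succ]
    push_cast; ring

lemma P_ne_zero {b : ℂ} (hb : ∀ k : ℕ, b ≠ -(k : ℂ)) (n : ℕ) : P b n ≠ 0 := by
  induction n with
  | zero => simp [P_zero]
  | succ n ih =>
    rw [P_succ]
    exact mul_ne_zero ih (fun h => hb n (by linear_combination h))

/-- The key Vandermonde-type identity behind Kummer's transformation. -/
lemma key_identity (n : ℕ) : ∀ a b : ℂ,
    ∑ j ∈ range (n+1), ((-1:ℂ)^j * (n.choose j : ℂ) * P (b-a) j * P (b+j) (n-j)) = P a n := by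
  induction n with
  | zero => intro a b; simp [P_zero]
  | succ n ih =>
    intro a b
    rw [Finset.sum_range_succ']
    have split : ∀ k ∈ Finset.range (n+1),
        (-1:ℂ) ^ (k + 1) * ((n + 1).choose (k + 1) : ℂ) * P (b - a) (k + 1) *
          P (b + ((k + 1 : ℕ) : ℂ)) (n + 1 - (k + 1))
        = ((-1:ℂ) ^ (k+1) * (n.choose k : ℂ) * P (b - a) (k+1) * P (b + k + 1) (n - k))
          + ((-1:ℂ) ^ (k+1) * (n.choose (k+1) : ℂ) * P (b - a) (k+1) *
              P (b + ((k + 1 : ℕ) : ℂ)) (n + 1 - (k + 1))) := by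
      intro k hk
      rw [Nat.choose_succ_succ]
      rw [show n + 1 - (k+1) = n - k by omega]
      simp only [Nat.succ_eq_add_one]
      push_cast
      ring
    rw [Finset.sum_congr rfl split, Finset.sum_add_distrib]
    have hsum_h : (∑ k ∈ Finset.range (n+1), (-1:ℂ) ^ (k+1) * (n.choose (k+1) : ℂ)
          * P (b - a) (k+1) * P (b + ((k + 1 : ℕ) : ℂ)) (n + 1 - (k + 1)))
        + (-1:ℂ) ^ 0 * ((n + 1).choose 0 : ℂ) * P (b - a) 0 * P (b + ((0:ℕ) : ℂ)) (n + 1 - 0)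
        = ∑ j ∈ Finset.range (n+1),
            (-1:ℂ) ^ j * (n.choose j : ℂ) * P (b - a) j * P (b + j) (n + 1 - j) := by
      have hstep := Finset.sum_range_succ' (fun j => (-1:ℂ) ^ j * (n.choose j : ℂ) * P (b - a) j
        * P (b + (j : ℂ)) (n + 1 - j)) (n+1)
      rw [show (((n+1).choose 0 : ℕ) : ℂ) = ((n.choose 0 : ℕ) : ℂ) by simp, ← hstep,
        Finset.sum_range_succ]
      simp [Nat.choose_succ_self]
    rw [add_assoc, hsum_h, ← Finset.sum_add_distrib]
    have ih' : ∑ j ∈ range (n+1),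
        ((-1:ℂ)^j * (n.choose j : ℂ) * P (b-a) j * P (b+j+1) (n-j)) = P (a+1) n := by
      rw [← ih (a+1) (b+1)]
      refine Finset.sum_congr rfl fun j hj => ?_
      rw [show b + 1 - (a+1) = b - a by ring, show b + 1 + (j:ℂ) = b + j + 1 by ring]
    have comb : ∀ j ∈ range (n+1),
        ((-1:ℂ) ^ (j+1) * (n.choose j : ℂ) * P (b - a) (j+1) * P (b + j + 1) (n - j))
          + ((-1:ℂ) ^ j * (n.choose j : ℂ) * P (b - a) j * P (b + j) (n + 1 - j))
        = a * ((-1:ℂ)^j * (n.choose j : ℂ) * P (b-a) j * P (b+j+1) (n-j)) := by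
      intro j hj
      have hjn : j ≤ n := Nat.lt_succ_iff.mp (Finset.mem_range.mp hj)
      rw [show n + 1 - j = (n-j)+1 by omega, P_succ (b-a) j, P_succ_left (b+(j:ℂ)) (n-j)]
      push_cast
      ring
    rw [Finset.sum_congr rfl comb, ← Finset.mul_sum, ih', ← P_succ_left]

/-- Absolute convergence of the ₁F₁ series. -/
lemma summable_norm_term (a b x : ℂ) (hb : ∀ k : ℕ, b ≠ -(k : ℂ)) :
    Summable fun j : ℕ => ‖P a j / P b j * x ^ j / (j.factorial : ℂ)‖ := by
  set f : ℕ → ℂ := fun j => P a j / P b j * x ^ j / (j.factorial : ℂ) with hf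
  have hrec : ∀ n : ℕ, f (n+1) = f n * ((a + n) * x / ((b + n) * ((n:ℂ) + 1))) := by
    intro n
    have hbn : P b n ≠ 0 := P_ne_zero hb n
    have hbn2 : b + (n:ℂ) ≠ 0 := fun h => hb n (by linear_combination h)
    have hfac : ((n.factorial : ℕ) : ℂ) ≠ 0 := Nat.cast_ne_zero.mpr n.factorial_ne_zero
    simp only [hf, P_succ, Nat.factorial_succ]
    push_cast
    field_simp
    ring
  apply summable_of_ratio_norm_eventually_le (r := 1/2) (by norm_num)
  have hN : ∀ᶠ n : ℕ in Filter.atTop, (‖a‖ + 2*‖b‖ + 4*‖x‖ + 1 : ℝ) ≤ n := by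
    exact (tendsto_natCast_atTop_atTop (R := ℝ)).eventually_ge_atTop _
  filter_upwards [hN] with n hn
  have hX0 : (0:ℝ) ≤ ‖x‖ := norm_nonneg x
  have hA0 : (0:ℝ) ≤ ‖a‖ := norm_nonneg a
  have hB0 : (0:ℝ) ≤ ‖b‖ := norm_nonneg b
  have h1 : ‖a + (n:ℂ)‖ ≤ ‖a‖ + n := by
    calc ‖a + (n:ℂ)‖ ≤ ‖a‖ + ‖(n:ℂ)‖ := norm_add_le _ _
    _ = ‖a‖ + n := by rw [Complex.norm_natCast]
  have h2 : (n:ℝ) - ‖b‖ ≤ ‖b + (n:ℂ)‖ := by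
    have : (n:ℝ) ≤ ‖b + (n:ℂ)‖ + ‖b‖ := by
      calc (n:ℝ) = ‖(b + (n:ℂ)) + (-b)‖ := by
            rw [show (b+(n:ℂ))+(-b) = (n:ℂ) by ring, Complex.norm_natCast]
      _ ≤ ‖b + (n:ℂ)‖ + ‖-b‖ := norm_add_le _ _
      _ = ‖b + (n:ℂ)‖ + ‖b‖ := by rw [norm_neg]
    linarith
  have hratio : ‖(a + (n:ℂ)) * x / ((b + (n:ℂ)) * ((n:ℂ) + 1))‖ ≤ 1/2 := by
    rw [norm_div, norm_mul, norm_mul]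
    have hn1 : ‖(n:ℂ) + 1‖ = (n:ℝ) + 1 := by
      rw [show (n:ℂ) + 1 = ((n+1 : ℕ) : ℂ) by push_cast; ring, Complex.norm_natCast]
      push_cast; ring
    rw [hn1]
    have hbnpos : (0:ℝ) < ‖b + (n:ℂ)‖ := by linarith
    rw [div_le_iff₀ (by positivity)]
    have h3 : ‖a‖ + (n:ℝ) ≤ 2 * ((n:ℝ) - ‖b‖) := by linarith
    have h4 : ‖x‖ ≤ ((n:ℝ) + 1)/4 := by linarith
    have h5 : ‖a + (n:ℂ)‖ * ‖x‖ ≤ (‖a‖ + n) * (((n:ℝ)+1)/4) :=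
      mul_le_mul h1 h4 hX0 (by linarith)
    nlinarith [mul_le_mul_of_nonneg_right h3 (by positivity : (0:ℝ) ≤ ((n:ℝ)+1)/4),
      mul_le_mul_of_nonneg_right h2 (by positivity : (0:ℝ) ≤ ((n:ℝ)+1)/2)]
  show ‖‖f (n+1)‖‖ ≤ 1/2 * ‖‖f n‖‖
  rw [Real.norm_of_nonneg (norm_nonneg _), Real.norm_of_nonneg (norm_nonneg _),
    hrec n, norm_mul]
  calc ‖f n‖ * ‖(a + (n:ℂ)) * x / ((b + (n:ℂ)) * ((n:ℂ) + 1))‖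
      ≤ ‖f n‖ * (1/2) := mul_le_mul_of_nonneg_left hratio (norm_nonneg _)
    _ = 1/2 * ‖f n‖ := by ring

/-- The coefficient identity obtained from the Cauchy product. -/
lemma coeff_identity (a b x : ℂ) (hb : ∀ k : ℕ, b ≠ -(k : ℂ)) (n : ℕ) :
    ∑ kl ∈ Finset.HasAntidiagonal.antidiagonal n,
      (x ^ kl.1 / (kl.1.factorial : ℂ)) *
        (P (b-a) kl.2 / P b kl.2 * (-x) ^ kl.2 / (kl.2.factorial : ℂ))
    = P a n / P b n * x ^ n / (n.factorial : ℂ) := by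
  have key := key_identity n a b
  rw [Finset.Nat.sum_antidiagonal_eq_sum_range_succ_mk, ← Finset.sum_range_reflect]
  have hterm : ∀ j ∈ range (n+1),
      x ^ (n.succ - 1 - j, n - (n.succ - 1 - j)).1 / ((n.succ - 1 - j, n - (n.succ - 1 - j)).1.factorial : ℂ) *
        (P (b - a) (n.succ - 1 - j, n - (n.succ - 1 - j)).2 / P b (n.succ - 1 - j, n - (n.succ - 1 - j)).2 *
            (-x) ^ (n.succ - 1 - j, n - (n.succ - 1 - j)).2 /
          ((n.succ - 1 - j, n - (n.succ - 1 - j)).2.factorial : ℂ))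
      = ((-1:ℂ)^j * (n.choose j : ℂ) * P (b-a) j * P (b+j) (n-j)) *
          (x ^ n / (P b n * (n.factorial : ℂ))) := by
    intro j hj
    have hjn : j ≤ n := Nat.lt_succ_iff.mp (Finset.mem_range.mp hj)
    simp only
    rw [show n.succ - 1 - j = n - j by omega, show n - (n - j) = j by omega]
    obtain ⟨m, rfl⟩ : ∃ m, n = j + m := ⟨n - j, by omega⟩
    rw [show j + m - j = m by omega, P_add b j m, neg_pow,
      show (((j+m).factorial : ℕ) : ℂ) = ((j+m).choose j : ℂ) * (j.factorial : ℂ) * (m.factorial : ℂ) by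
        rw [← Nat.choose_mul_factorial_mul_factorial (Nat.le_add_right j m),
          Nat.add_sub_cancel_left]; push_cast; ring]
    have h1 : P b j ≠ 0 := P_ne_zero hb j
    have h2 : P (b + j) m ≠ 0 := by
      refine P_ne_zero (fun k hk => hb (k + j) ?_) m
      push_cast; linear_combination hk
    have h3 : ((j.factorial : ℕ) : ℂ) ≠ 0 := Nat.cast_ne_zero.mpr j.factorial_ne_zero
    have h4 : ((m.factorial : ℕ) : ℂ) ≠ 0 := Nat.cast_ne_zero.mpr m.factorial_ne_zero
    have h5 : (((j+m).choose j : ℕ) : ℂ) ≠ 0 :=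
      Nat.cast_ne_zero.mpr (Nat.choose_pos (Nat.le_add_right j m)).ne'
    field_simp
    ring
  rw [Finset.sum_congr rfl hterm, ← Finset.sum_mul, key]
  have h1 : P b n ≠ 0 := P_ne_zero hb n
  have h3 : ((n.factorial : ℕ) : ℂ) ≠ 0 := Nat.cast_ne_zero.mpr n.factorial_ne_zero
  field_simp

theorem kummer_transformation (a b x : ℂ) (hb : ∀ k : ℕ, b ≠ -(k : ℂ)) :
    kummerF a b x = Complex.exp x * kummerF (b - a) b (-x) := by
  have hg : Summable fun j : ℕ => ‖P (b-a) j / P b j * (-x) ^ j / (j.factorial : ℂ)‖ :=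
    summable_norm_term (b-a) b (-x) hb
  have hexp : Summable fun i : ℕ => ‖x ^ i / (i.factorial : ℂ)‖ := by
    simpa [norm_div, norm_pow, Complex.norm_natCast] using Real.summable_pow_div_factorial ‖x‖
  have hexp_eq : Complex.exp x = ∑' i : ℕ, x ^ i / (i.factorial : ℂ) := by
    rw [Complex.exp_eq_exp_ℂ, NormedSpace.exp_eq_tsum_div]
  rw [show kummerF (b-a) b (-x)
      = ∑' j : ℕ, P (b-a) j / P b j * (-x) ^ j / (j.factorial : ℂ) from rfl, hexp_eq,
    tsum_mul_tsum_eq_tsum_sum_antidiagonal_of_summable_norm hexp hg,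
    show kummerF a b x = ∑' j : ℕ, P a j / P b j * x ^ j / (j.factorial : ℂ) from rfl]
  exact (tsum_congr (coeff_identity a b x hb)).symm
end

section
/- For every integer j ≥ 2 and every complex y with 0 < |y| < 1/2, the contour integral ∫_{|x|=1/2} x^{j-2} (log((1+x)/(1+y)))^j (x-y)^{-j} dx equals 0. -/
open Complex

theorem contour_integral_log_pow_vanishes (j : ℕ) (hj : 2 ≤ j) (y : ℂ)
    (hy0 : 0 < ‖y‖) (hy : ‖y‖ < 1 / 2) :
    (∮ x in C(0, 1 / 2),
        x ^ (j - 2) * (Complex.log ((1 + x) / (1 + y))) ^ j * (x - y) ^ (-(j : ℤ))) = 0 := by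
  set F : ℂ → ℂ := fun z => Complex.log ((1 + z) / (1 + y)) with hF
  have hy1 : (1 : ℂ) + y ≠ 0 := by
    intro h
    have : y = -1 := by linear_combination h
    rw [this] at hy
    norm_num at hy
  -- differentiability of F on the closed ball
  have hre : ∀ z : ℂ, z ∈ Metric.closedBall (0 : ℂ) (1 / 2) →
      0 < (((1 + z) / (1 + y)).re) := by
    intro z hz
    rw [Metric.mem_closedBall, dist_zero_right] at hz
    have hzre : |z.re| ≤ 1 / 2 := le_trans (Complex.abs_re_le_norm z) hz
    have hzim : |z.im| ≤ 1 / 2 := le_trans (Complex.abs_im_le_norm z) hz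
    have hyre : |y.re| < 1 / 2 := lt_of_le_of_lt (Complex.abs_re_le_norm y) hy
    have hyim : |y.im| < 1 / 2 := lt_of_le_of_lt (Complex.abs_im_le_norm y) hy
    rw [abs_le] at hzre hzim
    rw [abs_lt] at hyre hyim
    have hns : 0 < Complex.normSq (1 + y) := by
      rw [Complex.normSq_pos]; exact hy1
    rw [Complex.div_re]
    rw [← add_div]
    apply div_pos _ hns
    simp only [Complex.add_re, Complex.one_re, Complex.add_im, Complex.one_im, zero_add]
    nlinarith [mul_nonneg (by linarith : (0:ℝ) ≤ 1/2 - z.im) (by linarith : (0:ℝ) ≤ 1/2 - y.im),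
      mul_nonneg (by linarith : (0:ℝ) ≤ 1/2 + z.im) (by linarith : (0:ℝ) ≤ 1/2 + y.im),
      mul_pos (by linarith : (0:ℝ) < 1 + z.re) (by linarith : (0:ℝ) < 1 + y.re)]
  have hFd : ∀ z ∈ Metric.closedBall (0 : ℂ) (1 / 2), DifferentiableAt ℂ F z := by
    intro z hz
    have hslit : (1 + z) / (1 + y) ∈ Complex.slitPlane := Or.inl (hre z hz)
    exact (Complex.differentiableAt_log hslit).comp z
      (((differentiableAt_const (1 : ℂ)).add differentiableAt_id).div_const (1 + y))
  have hFd' : DifferentiableOn ℂ F (Metric.closedBall (0 : ℂ) (1 / 2)) :=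
    fun z hz => (hFd z hz).differentiableWithinAt
  have hynb : Metric.closedBall (0 : ℂ) (1 / 2) ∈ nhds y :=
    Metric.closedBall_mem_nhds_of_mem (by
      rw [Metric.mem_ball, dist_zero_right]; exact hy)
  have hHd : DifferentiableOn ℂ (dslope F y) (Metric.closedBall (0 : ℂ) (1 / 2)) :=
    (Complex.differentiableOn_dslope hynb).2 hFd'
  -- the regularized function
  set g : ℂ → ℂ := fun x => x ^ (j - 2) * (dslope F y x) ^ j with hg
  have hgd : DifferentiableOn ℂ g (Metric.closedBall (0 : ℂ) (1 / 2)) :=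
    ((differentiableOn_id.pow _).mul (hHd.pow _))
  have hzero : (∮ x in C(0, 1 / 2), g x) = 0 := by
    apply Complex.circleIntegral_eq_zero_of_differentiable_on_off_countable
      (by norm_num : (0:ℝ) ≤ 1/2) Set.countable_empty hgd.continuousOn
    intro z hz
    exact (hgd.differentiableAt (Filter.mem_of_superset
      (Metric.isOpen_ball.mem_nhds hz.1) Metric.ball_subset_closedBall))
  refine Eq.trans ?_ hzero
  apply circleIntegral.integral_congr (f := fun x =>
      x ^ (j - 2) * (Complex.log ((1 + x) / (1 + y))) ^ j * (x - y) ^ (-(j : ℤ)))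
    (by norm_num : (0:ℝ) ≤ 1/2)
  intro x hx
  rw [mem_sphere_zero_iff_norm] at hx
  have hxy : x ≠ y := by
    intro h; rw [h] at hx; rw [hx] at hy; linarith
  have hFy : F y = 0 := by
    simp only [hF]
    rw [div_self hy1, Complex.log_one]
  have hds : dslope F y x = (x - y)⁻¹ * F x := by
    rw [dslope_of_ne F hxy, slope_def_field, hFy, sub_zero, div_eq_inv_mul]
  simp only [hg, hds]
  rw [zpow_neg, zpow_natCast, mul_pow, ← inv_pow]
  ring
end
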